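/- Let n = 2 or n = 3, let Z_1, Z_2 ∈ ℝ^n with Z_1 ≠ Z_2, and let d_1 ≥ d_2 ≥ 0. If ‖Z_2 − Z_1‖/2 ≤ d_1 < ‖Z_2 − Z_1‖ and d_1 + d_2 ≤ ‖Z_2 − Z_1‖, then the set of global minimizers of the squared-distance-error objective O(W) = |‖W − Z_1‖² − d_1²| + |‖W − Z_2‖² − d_2²| is exactly the single point N_1 = Z_1 + d_1 (Z_2 − Z_1)/‖Z_2 − Z_1‖. -/

import Mathlib

open scoped RealInnerProductSpace

private lemma key_ineq (D d₁ d₂ a b : ℝ) (hD : 0 < D) (h1 : D / 2 ≤ d₁) (h2 : d₁ < D)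
    (h3 : d₁ + d₂ ≤ D) (hd2 : 0 ≤ d₂) (ha : 0 ≤ a) (hb : 0 ≤ b) (hab : D ≤ a + b) :
    (D - d₁) ^ 2 - d₂ ^ 2 ≤ |a ^ 2 - d₁ ^ 2| + |b ^ 2 - d₂ ^ 2| := by
  have A1 : a ^ 2 - d₁ ^ 2 ≤ |a ^ 2 - d₁ ^ 2| := le_abs_self _
  have A2 : -(a ^ 2 - d₁ ^ 2) ≤ |a ^ 2 - d₁ ^ 2| := neg_le_abs _
  have B1 : b ^ 2 - d₂ ^ 2 ≤ |b ^ 2 - d₂ ^ 2| := le_abs_self _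
  rcases le_or_gt a D with haD | haD
  · have hb2 : (D - a) ^ 2 ≤ b ^ 2 := by nlinarith
    rcases le_or_gt a d₁ with had | had
    · nlinarith
    · nlinarith [mul_nonneg (le_of_lt (sub_pos.mpr had)) (by linarith : (0:ℝ) ≤ a + d₁ - D)]
  · nlinarith [mul_pos (by linarith : (0:ℝ) < d₁) (sub_pos.mpr h2), sq_nonneg b]

private lemma key_eq (D d₁ d₂ a b : ℝ) (hD : 0 < D) (h1 : D / 2 ≤ d₁) (h2 : d₁ < D)
    (h3 : d₁ + d₂ ≤ D) (hd2 : 0 ≤ d₂) (ha : 0 ≤ a) (hb : 0 ≤ b) (hab : D ≤ a + b)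
    (hrev : |a ^ 2 - d₁ ^ 2| + |b ^ 2 - d₂ ^ 2| ≤ (D - d₁) ^ 2 - d₂ ^ 2) :
    a = d₁ ∧ b = D - d₁ := by
  have A1 : a ^ 2 - d₁ ^ 2 ≤ |a ^ 2 - d₁ ^ 2| := le_abs_self _
  have A2 : -(a ^ 2 - d₁ ^ 2) ≤ |a ^ 2 - d₁ ^ 2| := neg_le_abs _
  have B1 : b ^ 2 - d₂ ^ 2 ≤ |b ^ 2 - d₂ ^ 2| := le_abs_self _
  have had : a = d₁ := by
    rcases lt_trichotomy a d₁ with h | h | h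
    · exfalso
      have haD : a ≤ D := by linarith
      have hb2 : (D - a) ^ 2 ≤ b ^ 2 := by nlinarith
      nlinarith
    · exact h
    · exfalso
      rcases le_or_gt a D with haD | haD
      · have hb2 : (D - a) ^ 2 ≤ b ^ 2 := by nlinarith
        nlinarith [sq_nonneg (a - d₁)]
      · nlinarith [mul_pos (by linarith : (0:ℝ) < d₁) (sub_pos.mpr h2), sq_nonneg b]
  subst had
  refine ⟨rfl, ?_⟩
  have hbD : D - a ≤ b := by linarith
  have hb2 : b ^ 2 ≤ (D - a) ^ 2 := by
    have : (0:ℝ) ≤ b ^ 2 - d₂ ^ 2 := by nlinarith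
    rw [abs_of_nonneg this] at hrev
    have : |a ^ 2 - a ^ 2| = 0 := by simp
    nlinarith [abs_nonneg (a ^ 2 - a ^ 2)]
  nlinarith

theorem two_meas_squared_error_case_b
    (n : ℕ) (hn : n = 2 ∨ n = 3)
    (Z₁ Z₂ : EuclideanSpace ℝ (Fin n)) (hZ : Z₁ ≠ Z₂)
    (d₁ d₂ : ℝ) (hd₂ : 0 ≤ d₂) (hd : d₂ ≤ d₁)
    (O : EuclideanSpace ℝ (Fin n) → ℝ)
    (hO : ∀ W, O W = |‖W - Z₁‖ ^ 2 - d₁ ^ 2| + |‖W - Z₂‖ ^ 2 - d₂ ^ 2|)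
    (hcase₁ : ‖Z₂ - Z₁‖ / 2 ≤ d₁) (hcase₂ : d₁ < ‖Z₂ - Z₁‖)
    (hcase₃ : d₁ + d₂ ≤ ‖Z₂ - Z₁‖) :
    {W : EuclideanSpace ℝ (Fin n) | ∀ V, O W ≤ O V}
      = {Z₁ + (d₁ / ‖Z₂ - Z₁‖) • (Z₂ - Z₁)} := by
  set v := Z₂ - Z₁ with hv
  set D := ‖v‖ with hDdef
  have hD : 0 < D := by
    rw [hDdef, hv]
    exact norm_sub_pos_iff.mpr (Ne.symm hZ)
  have hd₁pos : 0 < d₁ := by linarith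
  set N₁ := Z₁ + (d₁ / D) • v with hN
  -- norms at N₁
  have hn1 : ‖N₁ - Z₁‖ = d₁ := by
    rw [hN]
    simp only [add_sub_cancel_left]
    rw [norm_smul, Real.norm_eq_abs, abs_of_nonneg (by positivity : (0:ℝ) ≤ d₁ / D)]
    field_simp
    rfl
  have hn2 : ‖N₁ - Z₂‖ = D - d₁ := by
    have : N₁ - Z₂ = (d₁ / D - 1) • v := by
      rw [hN, hv]
      rw [sub_smul, one_smul]
      abel
    rw [this, norm_smul, Real.norm_eq_abs,
      abs_of_nonpos (by rw [sub_nonpos]; exact (div_le_one hD).mpr hcase₂.le)]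
    field_simp
    rw [← hDdef]; ring
  -- value at N₁
  have hON : O N₁ = (D - d₁) ^ 2 - d₂ ^ 2 := by
    rw [hO, hn1, hn2]
    have h1 : |d₁ ^ 2 - d₁ ^ 2| = 0 := by simp
    have h2 : |(D - d₁) ^ 2 - d₂ ^ 2| = (D - d₁) ^ 2 - d₂ ^ 2 := by
      rw [abs_of_nonneg]; nlinarith
    rw [h1, h2, zero_add]
  -- N₁ is a minimizer
  have hmin : ∀ V, O N₁ ≤ O V := by
    intro V
    rw [hON, hO]
    have htri : D ≤ ‖V - Z₁‖ + ‖V - Z₂‖ := by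
      have := norm_sub_le_norm_sub_add_norm_sub Z₂ V Z₁
      rw [← hv] at this
      calc D = ‖v‖ := rfl
        _ ≤ ‖Z₂ - V‖ + ‖V - Z₁‖ := this
        _ = ‖V - Z₁‖ + ‖V - Z₂‖ := by rw [norm_sub_rev Z₂ V]; ring
    exact key_ineq D d₁ d₂ _ _ hD hcase₁ hcase₂ hcase₃ hd₂ (norm_nonneg _)
      (norm_nonneg _) htri
  ext W
  simp only [Set.mem_setOf_eq, Set.mem_singleton_iff]
  constructor
  · intro hW
    have hle : O W ≤ O N₁ := hW N₁
    rw [hON, hO] at hle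
    have htri : D ≤ ‖W - Z₁‖ + ‖W - Z₂‖ := by
      have := norm_sub_le_norm_sub_add_norm_sub Z₂ W Z₁
      rw [← hv] at this
      calc D = ‖v‖ := rfl
        _ ≤ ‖Z₂ - W‖ + ‖W - Z₁‖ := this
        _ = ‖W - Z₁‖ + ‖W - Z₂‖ := by rw [norm_sub_rev Z₂ W]; ring
    obtain ⟨ha, hb⟩ := key_eq D d₁ d₂ _ _ hD hcase₁ hcase₂ hcase₃ hd₂ (norm_nonneg _)
      (norm_nonneg _) htri hle
    -- equality in the triangle inequality
    set x := W - Z₁ with hx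
    set y := Z₂ - W with hy
    have hxy : x + y = v := by rw [hx, hy, hv]; abel
    have hny : ‖y‖ = D - d₁ := by rw [hy, norm_sub_rev]; exact hb
    have hinner : (inner ℝ x y : ℝ) = ‖x‖ * ‖y‖ := by
      have hsq := norm_add_sq_real x y
      rw [hxy, ha, hny] at hsq
      rw [ha, hny]
      have : ‖v‖ = D := rfl
      rw [this] at hsq
      nlinarith
    have hkey : ‖y‖ • x = ‖x‖ • y := (inner_eq_norm_mul_iff_real).mp hinner
    rw [ha, hny] at hkey
    -- hkey : (D - d₁) • (W - Z₁) = d₁ • (Z₂ - W)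
    have hDW : D • W = D • (Z₁ + (d₁ / D) • v) := by
      have hexp : D • (Z₁ + (d₁ / D) • v) = D • Z₁ + d₁ • v := by
        rw [smul_add, smul_smul, mul_div_cancel₀ _ hD.ne']
      rw [hexp, hv]
      rw [hx, hy] at hkey
      rw [smul_sub, smul_sub] at hkey
      have : D • W = (D - d₁) • W + d₁ • W := by rw [← add_smul]; ring_nf
      rw [this]
      rw [smul_sub]
      have h4 : (D - d₁) • W = (D - d₁) • Z₁ + (d₁ • Z₂ - d₁ • W) := by
        rw [← hkey]; abel
      rw [h4]
      have : D • Z₁ = (D - d₁) • Z₁ + d₁ • Z₁ := by rw [← add_smul]; ring_nf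
      rw [this]
      abel
    exact smul_right_injective _ hD.ne' hDW
  · intro hW
    rw [hW]
    exact hmin
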